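/- Let G be a complex semisimple Lie group and P, Q ⊆ G parabolic subgroups with P ∩ Q parabolic. If there exists a proper parabolic subgroup R ⊊ G containing both P and Q, then G/P is not Q-cycle-connected; in fact every Q-cycle is contracted to a single point by the G-equivariant projection G/P → G/R. -/

import Mathlib

open scoped Pointwise

/-- Surrogate definition of a parabolic subgroup of a (complex semisimple Lie) group:
a closed subgroup with compact (projective) quotient. -/
def IsParabolic (G : Type*) [Group G] [TopologicalSpace G] (H : Subgroup G) : Prop :=
  IsClosed (H : Set G) ∧ CompactSpace (G ⧸ H)

/-- A `Q`-cycle in `G ⧸ P`: a `G`-translate of the `Q`-orbit of the base point `x₀ = 1·P`. -/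
def IsQCycle (G : Type*) [Group G] (P Q : Subgroup G) (C : Set (G ⧸ P)) : Prop :=
  ∃ g : G, C = g • (MulAction.orbit Q ((1 : G) : G ⧸ P))

/-- A chain of `n + 1` `Q`-cycles connecting `x` to `y`: consecutive cycles intersect,
`x` lies in the first one and `y` in the last one. -/
def QCycleChain (G : Type*) [Group G] (P Q : Subgroup G) (n : ℕ) (x y : G ⧸ P) : Prop :=
  ∃ C : Fin (n + 1) → Set (G ⧸ P),
    (∀ i, IsQCycle G P Q (C i)) ∧
    (∀ i : Fin n, (C i.castSucc ∩ C i.succ).Nonempty) ∧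
    x ∈ C 0 ∧ y ∈ C (Fin.last n)

/-- `G ⧸ P` is `Q`-cycle-connected if any two points are joined by a finite chain of
`Q`-cycles. -/
def QCycleConnected (G : Type*) [Group G] (P Q : Subgroup G) : Prop :=
  ∀ x y : G ⧸ P, ∃ n : ℕ, QCycleChain G P Q n x y

/-- Projection `G ⧸ P → G ⧸ R` for `P ≤ R`. -/
def projQ {G : Type*} [Group G] (P R : Subgroup G) (h : P ≤ R) : G ⧸ P → G ⧸ R :=
  Quotient.map' id (fun a b hab => by
    rw [QuotientGroup.leftRel_apply] at hab ⊢
    exact h hab)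

lemma projQ_mk {G : Type*} [Group G] (P R : Subgroup G) (h : P ≤ R) (g : G) :
    projQ P R h (QuotientGroup.mk g) = QuotientGroup.mk g := rfl

lemma projQ_const_on_cycle {G : Type*} [Group G] (P Q R : Subgroup G)
    (hPR : P ≤ R) (hQR : Q ≤ R) {C : Set (G ⧸ P)} (hC : IsQCycle G P Q C) :
    ∃ z : G ⧸ R, ∀ a ∈ C, projQ P R hPR a = z := by
  obtain ⟨g, rfl⟩ := hC
  refine ⟨QuotientGroup.mk g, ?_⟩
  rintro a ⟨b, ⟨q, rfl⟩, rfl⟩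
  show projQ P R hPR (QuotientGroup.mk (g * ((q : G) * 1))) = QuotientGroup.mk g
  rw [projQ_mk, QuotientGroup.eq]
  simpa using R.inv_mem (hQR q.2)

/-- If there exists a proper parabolic subgroup `R ⊊ G` containing both `P` and `Q`, then
`G ⧸ P` is not `Q`-cycle-connected; in fact every `Q`-cycle is contracted to a single point
by the `G`-equivariant projection `G ⧸ P → G ⧸ R`. -/
theorem stmt1 (G : Type*) [Group G] [TopologicalSpace G] [IsTopologicalGroup G]
    (P Q R : Subgroup G)
    (hP : IsParabolic G P) (hQ : IsParabolic G Q) (hPQ : IsParabolic G (P ⊓ Q))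
    (hR : IsParabolic G R) (hRtop : R ≠ ⊤) (hPR : P ≤ R) (hQR : Q ≤ R) :
    ¬ QCycleConnected G P Q ∧
      ∀ C : Set (G ⧸ P), IsQCycle G P Q C →
        ∃ z : G ⧸ R, ∀ g : G, (QuotientGroup.mk g : G ⧸ P) ∈ C →
          (QuotientGroup.mk g : G ⧸ R) = z := by
  constructor
  · intro hconn
    -- pick g₀ ∉ R
    obtain ⟨g₀, hg₀⟩ : ∃ g₀ : G, g₀ ∉ R := by
      by_contra h
      push_neg at h
      exact hRtop (Subgroup.eq_top_iff' R |>.2 h)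
    obtain ⟨n, Cs, hcyc, hint, hx, hy⟩ :=
      hconn (QuotientGroup.mk (1 : G)) (QuotientGroup.mk g₀)
    -- each cycle has constant image
    choose z hz using fun i => projQ_const_on_cycle P Q R hPR hQR (hcyc i)
    have hconst : ∀ m : ℕ, ∀ hm : m < n + 1, z ⟨m, hm⟩ = z 0 := by
      intro m
      induction m with
      | zero => intro hm; rfl
      | succ k ih =>
        intro hm
        have hk : k < n := Nat.lt_of_succ_lt_succ hm
        obtain ⟨a, ha1, ha2⟩ := hint ⟨k, hk⟩
        have e1 : z (Fin.castSucc ⟨k, hk⟩) = projQ P R hPR a :=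
          (hz _ a ha1).symm
        have e2 : z (Fin.succ ⟨k, hk⟩) = projQ P R hPR a :=
          (hz _ a ha2).symm
        have : (Fin.succ ⟨k, hk⟩ : Fin (n + 1)) = ⟨k + 1, hm⟩ := rfl
        rw [← this, e2, ← e1]
        exact ih (Nat.lt_of_lt_of_le hk (Nat.le_succ n))
    have h1 : projQ P R hPR (QuotientGroup.mk (1 : G)) = z 0 := hz 0 _ hx
    have h2 : projQ P R hPR (QuotientGroup.mk g₀) = z (Fin.last n) := hz _ _ hy
    have hlast : z (Fin.last n) = z 0 := hconst n (Nat.lt_succ_self n)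
    have : (QuotientGroup.mk (1 : G) : G ⧸ R) = QuotientGroup.mk g₀ := by
      rw [← projQ_mk P R hPR, ← projQ_mk P R hPR, h1, h2, hlast]
    rw [QuotientGroup.eq] at this
    exact hg₀ (by simpa using this)
  · intro C hC
    obtain ⟨z, hz⟩ := projQ_const_on_cycle P Q R hPR hQR hC
    exact ⟨z, fun g hg => by rw [← projQ_mk P R hPR g]; exact hz _ hg⟩
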